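/- For a positive integer a, define the step function η_a : ℝ → ℤ of period 2π by η_a(φ) = a + 1 − 2k if 2π(k−1)/a < φ < 2πk/a (k = 1,…,a), η_a(φ) = a − 2k if φ = 2πk/a (k = 1,…,a−1), and η_a(0) = 0. Let f_n(φ) = −sin((n+1)φ) + sin(nφ) + sin(φ) and let sgn x = x/|x| for x ≠ 0, sgn 0 = 0. Then for every positive integer a and every φ ∈ ℝ, the sum Σ_{n=1}^{a−1} sgn(f_n(φ)) equals η_a(φ). -/

import Mathlib

open Real

/-- The sign of a real number, as an integer: `x/|x|` for `x ≠ 0` and `0` for `x = 0`. -/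
noncomputable def sgnR (x : ℝ) : ℤ := if 0 < x then 1 else if x < 0 then -1 else 0

lemma sgnR_of_pos {x : ℝ} (h : 0 < x) : sgnR x = 1 := by simp [sgnR, h]

lemma sgnR_eq (x : ℝ) : sgnR x = ((SignType.sign x : SignType) : ℤ) := by
  unfold sgnR
  rcases lt_trichotomy x 0 with h|h|h
  · simp [sign_apply, h, asymm h]
  · simp [sign_apply, h]
  · simp [sign_apply, h, asymm h]

lemma sgnR_mul (u v : ℝ) : sgnR (u * v) = sgnR u * sgnR v := by
  rw [sgnR_eq, sgnR_eq, sgnR_eq, sign_mul]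
  push_cast
  ring

lemma trig_id (A B : ℝ) :
    -Real.sin (2*A + 2*B) + Real.sin (2*A) + Real.sin (2*B)
      = 4 * Real.sin A * Real.sin B * Real.sin (A + B) := by
  rw [Real.sin_add A B, Real.sin_add (2*A) (2*B), Real.sin_two_mul, Real.sin_two_mul,
    Real.cos_two_mul, Real.cos_two_mul]
  linear_combination (-4*Real.sin A*Real.cos A)*(Real.sin_sq_add_cos_sq B) + (-4*Real.sin B*Real.cos B)*(Real.sin_sq_add_cos_sq A)

lemma sgn_sin_pi (y : ℝ) :
    sgnR (Real.sin (π * y)) = if Int.fract y = 0 then 0 else if Even ⌊y⌋ then 1 else -1 := by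
  have hy : π * y = π * Int.fract y + (⌊y⌋ : ℤ) * π := by
    rw [Int.fract]; ring
  rw [hy, Real.sin_add_int_mul_pi]
  by_cases h0 : Int.fract y = 0
  · simp [h0, sgnR]
  · have hfr : 0 < Int.fract y := lt_of_le_of_ne (Int.fract_nonneg y) (Ne.symm h0)
    have hfr1 : Int.fract y < 1 := Int.fract_lt_one y
    have hs : 0 < Real.sin (π * Int.fract y) := by
      apply Real.sin_pos_of_pos_of_lt_pi (by positivity)
      nlinarith [Real.pi_pos]
    rcases Int.even_or_odd ⌊y⌋ with he | ho
    · rw [he.neg_one_zpow, one_mul]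
      simp [h0, he, sgnR_of_pos hs]
    · rw [Odd.neg_one_zpow ho, neg_one_mul]
      have hneg : sgnR (-Real.sin (π * Int.fract y)) = -1 := by
        unfold sgnR
        rw [if_neg (by linarith), if_pos (by linarith)]
      simp [h0, Int.not_even_iff_odd.2 ho, hneg]

-- ceil facts
lemma ceil_of_fract_zero {y : ℝ} (h : Int.fract y = 0) : ⌈y⌉ = ⌊y⌋ := by
  have : y = (⌊y⌋ : ℝ) := by have := Int.fract y; rw [Int.fract] at h; linarith
  rw [this]; simp

lemma ceil_of_fract_ne {y : ℝ} (h : Int.fract y ≠ 0) : ⌈y⌉ = ⌊y⌋ + 1 := by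
  have h1 : 0 < Int.fract y := lt_of_le_of_ne (Int.fract_nonneg y) (Ne.symm h)
  rw [Int.fract] at h1
  apply Int.ceil_eq_iff.2
  constructor
  · push_cast; linarith
  · push_cast; linarith [Int.lt_floor_add_one y]

lemma key_prod (y z : ℝ) (h1 : 0 < z - y) (h2 : z - y < 1) :
    sgnR (Real.sin (π * y)) * sgnR (Real.sin (π * z))
      = 1 - ((⌊z⌋ : ℤ) - ⌊y⌋) - (⌈z⌉ - ⌈y⌉) := by
  have hfy := Int.floor_le y
  have hfy' := Int.lt_floor_add_one y
  have hfz := Int.floor_le z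
  have hfz' := Int.lt_floor_add_one z
  have hmono : ⌊y⌋ ≤ ⌊z⌋ := Int.floor_le_floor (by linarith)
  have hmono2 : ⌊z⌋ ≤ ⌊y⌋ + 1 := by
    have : ⌊z⌋ ≤ ⌊y + 1⌋ := Int.floor_le_floor (by linarith)
    simpa using this
  rw [sgn_sin_pi, sgn_sin_pi]
  by_cases hy0 : Int.fract y = 0
  · -- y is an integer; z in (⌊y⌋, ⌊y⌋+1) : fract z ≠ 0, ⌊z⌋ = ⌊y⌋
    have hyint : y = (⌊y⌋ : ℝ) := by rw [Int.fract] at hy0; linarith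
    have hfloorz : ⌊z⌋ = ⌊y⌋ := by
      apply Int.floor_eq_iff.2
      refine ⟨by rw [← hyint]; linarith, by push_cast; linarith⟩
    have hz0 : Int.fract z ≠ 0 := by
      intro h
      have hzint : z = (⌊z⌋ : ℝ) := by rw [Int.fract] at h; linarith
      rw [hzint, hfloorz, hyint] at h1 h2
      simp at h1
    rw [ceil_of_fract_zero hy0, ceil_of_fract_ne hz0, hfloorz]
    simp [hy0, hz0]
  · by_cases hz0 : Int.fract z = 0
    · -- z integer, y in (⌊z⌋-1, ⌊z⌋): ⌊y⌋ = ⌊z⌋ - 1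
      have hzint : z = (⌊z⌋ : ℝ) := by rw [Int.fract] at hz0; linarith
      have hfy1 : 0 < Int.fract y := lt_of_le_of_ne (Int.fract_nonneg y) (Ne.symm hy0)
      rw [Int.fract] at hfy1
      have hfloory : ⌊y⌋ = ⌊z⌋ - 1 := by
        apply Int.floor_eq_iff.2
        constructor <;> push_cast <;> linarith
      rw [ceil_of_fract_zero hz0, ceil_of_fract_ne hy0, hfloory]
      simp [hy0, hz0]
      try ring
    · rw [ceil_of_fract_ne hy0, ceil_of_fract_ne hz0]
      rcases eq_or_lt_of_le hmono with he | hlt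
      · rw [← he]
        rcases Int.even_or_odd ⌊y⌋ with hp | hp
        · simp [hy0, hz0, hp, ← he]; try ring
        · simp [hy0, hz0, Int.not_even_iff_odd.2 hp, ← he]; try ring
      · have he : ⌊z⌋ = ⌊y⌋ + 1 := le_antisymm hmono2 hlt
        rw [he]
        rcases Int.even_or_odd ⌊y⌋ with hp | hp
        · have hodd : ¬ Even (⌊y⌋ + 1) := by simp [Int.even_add_one, hp]
          simp [hy0, hz0, hp, hodd, he]; try ring
        · have heven : Even (⌊y⌋ + 1) := Int.even_add_one.2 (Int.not_even_iff_odd.2 hp)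
          simp [hy0, hz0, Int.not_even_iff_odd.2 hp, heven, he]; try ring

lemma term_eq (x : ℝ) (hx0 : 0 < x) (hx1 : x < 1) (n : ℕ) :
    sgnR (-Real.sin ((n + 1) * (2*π*x)) + Real.sin (n * (2*π*x)) + Real.sin (2*π*x))
      = 1 - ((⌊((n:ℝ)+1)*x⌋ : ℤ) - ⌊(n:ℝ)*x⌋) - ((⌈((n:ℝ)+1)*x⌉ : ℤ) - ⌈(n:ℝ)*x⌉) := by
  have hB : 0 < Real.sin (π * x) :=
    Real.sin_pos_of_pos_of_lt_pi (by positivity) (by nlinarith [pi_pos])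
  have e1 : -Real.sin ((n + 1) * (2*π*x)) + Real.sin (n * (2*π*x)) + Real.sin (2*π*x)
      = (4 * Real.sin (π*x)) * (Real.sin (π*((n:ℝ)*x)) * Real.sin (π*(((n:ℝ)+1)*x))) := by
    rw [show ((n:ℝ)+1) * (2*π*x) = 2*(π*(↑n*x)) + 2*(π*x) by ring,
        show (n:ℝ) * (2*π*x) = 2*(π*(↑n*x)) by ring,
        show 2*π*x = 2*(π*x) by ring, trig_id,
        show π*(↑n*x)+π*x = π*((↑n+1)*x) by ring]
    ring
  rw [e1, sgnR_mul, sgnR_of_pos (by linarith : (0:ℝ) < 4 * Real.sin (π*x)), one_mul, sgnR_mul,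
      key_prod (↑n*x) ((↑n+1)*x)
        (by linarith [show ((n:ℝ)+1)*x - ↑n*x = x from by ring])
        (by linarith [show ((n:ℝ)+1)*x - ↑n*x = x from by ring])]

lemma sum_eq (a : ℕ) (ha : 0 < a) (x : ℝ) (hx0 : 0 < x) (hx1 : x < 1) :
    (∑ n ∈ Finset.Icc 1 (a - 1),
      sgnR (-Real.sin ((n + 1) * (2*π*x)) + Real.sin (n * (2*π*x)) + Real.sin (2*π*x)))
      = a - ⌊(a:ℝ)*x⌋ - ⌈(a:ℝ)*x⌉ := by
  have hIcc : Finset.Icc 1 (a-1) = Finset.Ico 1 a := by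
    rw [← Finset.Ico_add_one_right_eq_Icc]
    congr 1
    omega
  rw [hIcc, Finset.sum_Ico_eq_sum_range]
  set u : ℕ → ℤ := fun i => ⌊((i+1 : ℕ):ℝ)*x⌋ with hu
  set v : ℕ → ℤ := fun i => ⌈((i+1 : ℕ):ℝ)*x⌉ with hv
  have hterm : ∀ i : ℕ,
      sgnR (-Real.sin (((1+i:ℕ) + 1) * (2*π*x)) + Real.sin ((1+i:ℕ) * (2*π*x)) + Real.sin (2*π*x))
        = 1 - (u (i+1) - u i) - (v (i+1) - v i) := by
    intro i
    rw [term_eq x hx0 hx1 (1+i)]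
    have c1 : (((1+i:ℕ):ℝ)+1) = ((i+1+1 : ℕ):ℝ) := by push_cast; ring
    have c2 : ((1+i:ℕ):ℝ) = ((i+1 : ℕ):ℝ) := by push_cast; ring
    rw [c1, c2, hu, hv]
  rw [Finset.sum_congr rfl (fun i _ => hterm i), Finset.sum_sub_distrib,
    Finset.sum_sub_distrib, Finset.sum_const, Finset.sum_range_sub u, Finset.sum_range_sub v]
  have ha1 : a - 1 + 1 = a := by omega
  have hu0 : u 0 = 0 := by
    simp only [hu]
    norm_num
    exact ⟨le_of_lt hx0, hx1⟩
  have hceil : (⌈x⌉ : ℤ) = 1 := by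
    rw [Int.ceil_eq_iff] <;> push_cast <;> constructor <;> linarith
  have hv0 : v 0 = 1 := by
    simp only [hv]
    norm_num [hceil]
  have hua : u (a-1) = ⌊(a:ℝ)*x⌋ := by simp only [hu, ha1]
  have hva : v (a-1) = ⌈(a:ℝ)*x⌉ := by simp only [hv, ha1]
  rw [hu0, hv0, hua, hva, Finset.card_range, nsmul_eq_mul, mul_one]
  have : ((a-1 : ℕ) : ℤ) = (a : ℤ) - 1 := by
    have := Nat.cast_pred ha (R := ℤ); exact this
  rw [this]; ring

/-- let `η_a : ℝ → ℤ` be the `2π`-periodic step function with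
`η_a(φ) = a + 1 − 2k` for `2π(k−1)/a < φ < 2πk/a` (`k = 1,…,a`), `η_a(φ) = a − 2k`
at `φ = 2πk/a` (`k = 1,…,a−1`) and `η_a(0) = 0`. Then for every positive integer `a`
and every real `φ`, `Σ_{n=1}^{a−1} sgn(f_n(φ)) = η_a(φ)` where
`f_n(φ) = −sin((n+1)φ) + sin(nφ) + sin(φ)`. -/
theorem sum_sgn_f_eq_eta (a : ℕ) (ha : 0 < a) (η : ℝ → ℤ)
    (hη₁ : ∀ k : ℕ, 1 ≤ k → k ≤ a → ∀ φ : ℝ,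
      2 * π * (k - 1) / a < φ → φ < 2 * π * k / a → η φ = a + 1 - 2 * k)
    (hη₂ : ∀ k : ℕ, 1 ≤ k → k ≤ a - 1 → η (2 * π * k / a) = a - 2 * k)
    (hη₃ : η 0 = 0)
    (hper : ∀ φ : ℝ, η (φ + 2 * π) = η φ) :
    ∀ φ : ℝ, (∑ n ∈ Finset.Icc 1 (a - 1),
      sgnR (-Real.sin ((n + 1) * φ) + Real.sin (n * φ) + Real.sin φ)) = η φ := by
  have hper' : ∀ (ψ : ℝ) (m : ℤ), η (ψ + 2 * π * m) = η ψ := by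
    intro ψ m
    induction m using Int.induction_on with
    | zero => simp
    | succ k ih =>
        rw [show ψ + 2*π*((k:ℤ)+1 : ℤ) = (ψ + 2*π*(k:ℤ)) + 2*π by push_cast; ring, hper]
        exact ih
    | pred k ih =>
        have h := hper (ψ + 2*π*(-(k:ℤ)-1 : ℤ))
        rw [show ψ + 2*π*((-(k:ℤ)-1 : ℤ):ℝ) + 2*π = ψ + 2*π*((-(k:ℤ):ℤ):ℝ) by push_cast; ring] at h
        exact h.symm.trans ih
  intro φ
  set m : ℤ := ⌊φ / (2*π)⌋ with hm
  set x : ℝ := Int.fract (φ / (2*π)) with hx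
  have h2π : (0:ℝ) < 2*π := by positivity
  have hx0 : 0 ≤ x := Int.fract_nonneg _
  have hx1 : x < 1 := Int.fract_lt_one _
  have hφ : φ = 2*π*x + 2*π*m := by
    rw [hx, Int.fract, ← hm]
    field_simp
    ring
  have hηφ : η φ = η (2*π*x) := by rw [hφ]; exact hper' (2*π*x) m
  have hsum : (∑ n ∈ Finset.Icc 1 (a - 1),
      sgnR (-Real.sin ((n + 1) * φ) + Real.sin (n * φ) + Real.sin φ))
      = (∑ n ∈ Finset.Icc 1 (a - 1),
      sgnR (-Real.sin ((n + 1) * (2*π*x)) + Real.sin (n * (2*π*x)) + Real.sin (2*π*x))) := by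
    apply Finset.sum_congr rfl
    intro n _
    congr 1
    have e1 : ((n:ℝ) + 1) * φ = ((n:ℝ)+1) * (2*π*x) + ((((n:ℤ)+1)*m : ℤ) : ℝ) * (2*π) := by
      rw [hφ]; push_cast; ring
    have e2 : (n:ℝ) * φ = (n:ℝ) * (2*π*x) + ((((n:ℤ))*m : ℤ) : ℝ) * (2*π) := by
      rw [hφ]; push_cast; ring
    have e3 : φ = (2*π*x) + ((m : ℤ) : ℝ) * (2*π) := by rw [hφ]; push_cast; ring
    rw [e1, Real.sin_add_int_mul_two_pi, e2, Real.sin_add_int_mul_two_pi]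
    rw [e3, Real.sin_add_int_mul_two_pi]
  rw [hsum, hηφ]
  rcases eq_or_lt_of_le hx0 with h0 | hx0'
  · -- x = 0
    rw [← h0]
    norm_num [sgnR, hη₃]
  · rw [sum_eq a ha x hx0' hx1]
    set K : ℤ := ⌊(a:ℝ)*x⌋ with hK
    have hax0 : 0 < (a:ℝ)*x := by positivity
    have haxa : (a:ℝ)*x < a := by
      nth_rewrite 2 [show (a:ℝ) = (a:ℝ)*1 by ring]
      exact mul_lt_mul_of_pos_left hx1 (by positivity)
    have hK0 : 0 ≤ K := Int.floor_nonneg.2 (le_of_lt hax0)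
    have h1 : ((K.toNat : ℕ) : ℤ) = K := Int.toNat_of_nonneg hK0
    have h1R : ((K.toNat : ℕ) : ℝ) = (K : ℝ) := by exact_mod_cast h1
    have hKa : K < a := by
      rw [hK]
      exact_mod_cast Int.floor_lt.2 (by exact_mod_cast haxa)
    have hfloor_le : (K:ℝ) ≤ (a:ℝ)*x := Int.floor_le _
    have hlt : (a:ℝ)*x < K + 1 := Int.lt_floor_add_one _
    by_cases hint : Int.fract ((a:ℝ)*x) = 0
    · -- a*x = K is an integer, 1 ≤ K ≤ a-1
      have haxK : (a:ℝ)*x = (K:ℝ) := by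
        rw [Int.fract] at hint; rw [hK]; linarith
      have hK1 : 1 ≤ K := by
        by_contra h
        push_neg at h
        interval_cases K
        · rw [haxK] at hax0; norm_num at hax0
      have hxK : x = (K:ℝ)/a := by
        field_simp
        linarith [haxK]
      have hkey := hη₂ K.toNat (by omega) (by omega)
      rw [show 2*π*((K.toNat : ℕ):ℝ)/a = 2*π*x by rw [h1R, hxK]; ring] at hkey
      rw [hkey, ceil_of_fract_zero hint, ← hK, h1]
      ring
    · -- a*x strictly between K and K+1
      have hflt : (K:ℝ) < (a:ℝ)*x := by
        rcases eq_or_lt_of_le hfloor_le with he | h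
        · exfalso; apply hint; rw [Int.fract, ← hK, ← he]; ring
        · exact h
      set k : ℕ := K.toNat + 1 with hk
      have hcast : ((k : ℕ) : ℝ) = (K : ℝ) + 1 := by
        rw [hk]; push_cast; rw [h1R]
      have hkey := hη₁ k (by omega) (by omega) (2*π*x)
        (by
          rw [hcast, show (K:ℝ) + 1 - 1 = (K:ℝ) by ring]
          rw [div_lt_iff₀ (by positivity : (0:ℝ) < a)]
          calc 2*π*(K:ℝ) = 2*π* ((K:ℝ)) := by ring
            _ < 2*π*((a:ℝ)*x) := by apply mul_lt_mul_of_pos_left hflt (by positivity)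
            _ = 2*π*x*a := by ring)
        (by
          rw [hcast, lt_div_iff₀ (by positivity : (0:ℝ) < a)]
          calc 2*π*x*a = 2*π*((a:ℝ)*x) := by ring
            _ < 2*π*((K:ℝ)+1) := by apply mul_lt_mul_of_pos_left hlt (by positivity))
      rw [hkey, ceil_of_fract_ne hint, ← hK]
      have hkZ : ((k : ℕ) : ℤ) = K + 1 := by rw [hk]; push_cast; rw [h1]
      rw [hkZ]
      ring
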